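/- arXiv:0910.5688 — 3 statements merged into one kernel-verified Lean document; each statement's English description precedes it below -/
import Mathlib

section
/- Let C be a nonempty closed convex subset of the Euclidean plane ℝ² and let t be a nonzero vector with C + t = C. Then C + r·t = C for every real number r. Consequently, if in addition C has nonempty interior and C ≠ ℝ², then C is either a closed half-plane whose boundary line is parallel to t, or a closed strip bounded by two distinct parallel lines each parallel to t. -/
noncomputable section

abbrev Plane := EuclideanSpace ℝ (Fin 2)

/-- `C` is a closed half-plane whose boundary line is parallel to the direction `d`:
there is a nonzero linear functional `f` vanishing on `d` and a constant `c` with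
`C = {x | f x ≤ c}`. -/
def IsClosedHalfPlaneDir (C : Set Plane) (d : Plane) : Prop :=
  ∃ (f : Plane →ₗ[ℝ] ℝ) (c : ℝ), f ≠ 0 ∧ f d = 0 ∧ C = {x | f x ≤ c}

/-- `C` is a closed strip bounded by two distinct parallel lines, each parallel to the
direction `d`: there is a nonzero linear functional `f` vanishing on `d` and constants
`c₁ < c₂` with `C = {x | c₁ ≤ f x ≤ c₂}`. -/
def IsClosedStripDir (C : Set Plane) (d : Plane) : Prop :=
  ∃ (f : Plane →ₗ[ℝ] ℝ) (c₁ c₂ : ℝ), f ≠ 0 ∧ f d = 0 ∧ c₁ < c₂ ∧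
    C = {x | c₁ ≤ f x ∧ f x ≤ c₂}

/-- **Translation-invariant closed convex planar sets.** If `C ⊆ ℝ²` is nonempty, closed
and convex and `C + t = C` for some nonzero vector `t`, then `C + r • t = C` for every
real `r`; consequently, if moreover `C` has nonempty interior and `C ≠ ℝ²`, then `C` is a
closed half-plane whose boundary line is parallel to `t`, or a closed strip bounded by two
distinct parallel lines each parallel to `t`. -/
theorem translation_invariant_closed_convex (C : Set Plane) (hne : C.Nonempty)
    (hcl : IsClosed C) (hconv : Convex ℝ C) (t : Plane) (ht : t ≠ 0)
    (htrans : (fun x => x + t) '' C = C) :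
    (∀ r : ℝ, (fun x => x + r • t) '' C = C) ∧
    ((interior C).Nonempty → C ≠ Set.univ →
      IsClosedHalfPlaneDir C t ∨ IsClosedStripDir C t) := by
  classical
  have hfwd : ∀ x ∈ C, x + t ∈ C := by
    intro x hx; rw [← htrans]; exact ⟨x, hx, rfl⟩
  have hbwd : ∀ x ∈ C, x - t ∈ C := by
    intro x hx
    rw [← htrans] at hx
    obtain ⟨c, hc, hct⟩ := hx
    have hct' : c + t = x := hct
    have : x - t = c := by rw [← hct']; abel
    rwa [this]
  have hnat : ∀ x ∈ C, ∀ n : ℕ, x + (n : ℝ) • t ∈ C ∧ x - (n : ℝ) • t ∈ C := by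
    intro x hx n
    induction n with
    | zero => constructor <;> simpa using hx
    | succ n ih =>
      constructor
      · have h := hfwd _ ih.1
        have he : (x + (n : ℝ) • t) + t = x + ((n + 1 : ℕ) : ℝ) • t := by
          push_cast; module
        rwa [he] at h
      · have h := hbwd _ ih.2
        have he : (x - (n : ℝ) • t) - t = x - ((n + 1 : ℕ) : ℝ) • t := by
          push_cast; module
        rwa [he] at h
  have key : ∀ x ∈ C, ∀ r : ℝ, x + r • t ∈ C := by
    intro x hx r
    obtain ⟨n, hn1, hn2⟩ : ∃ n : ℕ, |r| ≤ (n : ℝ) ∧ 0 < (n : ℝ) := by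
      refine ⟨⌈|r|⌉₊ + 1, ?_, by positivity⟩
      push_cast
      have := Nat.le_ceil |r|
      linarith
    set N : ℝ := (n : ℝ) with hN
    have habs := abs_le.mp hn1
    set a : ℝ := (N - r) / (2 * N) with ha'
    set b : ℝ := (N + r) / (2 * N) with hb'
    have ha : 0 ≤ a := div_nonneg (by linarith [habs.2]) (by linarith)
    have hb : 0 ≤ b := div_nonneg (by linarith [habs.1]) (by linarith)
    have hab : a + b = 1 := by
      rw [ha', hb']; field_simp; ring
    have hmem := hconv (hnat x hx n).2 (hnat x hx n).1 ha hb hab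
    have h2 : b * N - a * N = r := by
      rw [ha', hb']; field_simp; ring
    have heq : a • (x - N • t) + b • (x + N • t) = x + r • t := by
      have h3 : a • (x - N • t) + b • (x + N • t)
          = (a + b) • x + (b * N - a * N) • t := by module
      rw [h3, hab, h2, one_smul]
    rwa [heq] at hmem
  have part1 : ∀ r : ℝ, (fun x => x + r • t) '' C = C := by
    intro r
    ext y
    constructor
    · rintro ⟨x, hx, rfl⟩; exact key x hx r
    · intro hy
      refine ⟨y + (-r) • t, key y hy (-r), ?_⟩
      show y + (-r) • t + r • t = y
      module
  refine ⟨part1, ?_⟩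
  intro hint hne_univ
  set f : Plane →ₗ[ℝ] ℝ :=
    { toFun := fun x => x 0 * t 1 - x 1 * t 0
      map_add' := by
        intro x y
        simp only [PiLp.add_apply]
        ring
      map_smul' := by
        intro c x
        simp only [PiLp.smul_apply, smul_eq_mul, RingHom.id_apply]
        ring } with hf
  have hfapp : ∀ x : Plane, f x = x 0 * t 1 - x 1 * t 0 := fun x => rfl
  have hft : f t = 0 := by rw [hfapp]; ring
  have hf0 : f ≠ 0 := by
    intro h
    apply ht
    have h0 : f (EuclideanSpace.single 0 1) = 0 := by rw [h]; rfl
    have h1 : f (EuclideanSpace.single 1 1) = 0 := by rw [h]; rfl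
    rw [hfapp] at h0 h1
    simp [EuclideanSpace.single_apply] at h0 h1
    ext i
    fin_cases i <;> simp [h0, h1]
  have hker : ∀ x : Plane, f x = 0 → ∃ r : ℝ, x = r • t := by
    intro x hx
    rw [hfapp] at hx
    have hx' : x 0 * t 1 = x 1 * t 0 := by linarith
    have htt : t 0 ≠ 0 ∨ t 1 ≠ 0 := by
      by_contra h
      push_neg at h
      apply ht
      ext i
      fin_cases i
      · simpa using h.1
      · simpa using h.2
    have hsmul : ∀ (r : ℝ) (i : Fin 2), (r • t) i = r * t i := fun r i => rfl
    rcases htt with h0 | h1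
    · refine ⟨x 0 / t 0, ?_⟩
      ext i
      fin_cases i
      · show x 0 = (x 0 / t 0) • t 0
        rw [smul_eq_mul]; field_simp
      · show x 1 = (x 0 / t 0) • t 1
        rw [smul_eq_mul]
        field_simp
        linarith [hx']
    · refine ⟨x 1 / t 1, ?_⟩
      ext i
      fin_cases i
      · show x 0 = (x 1 / t 1) • t 0
        rw [smul_eq_mul]
        field_simp
        linarith [hx']
      · show x 1 = (x 1 / t 1) • t 1
        rw [smul_eq_mul]; field_simp
  obtain ⟨v, hv⟩ : ∃ v, f v ≠ 0 := by
    by_contra h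
    push_neg at h
    exact hf0 (LinearMap.ext h)
  set w : Plane := (f v)⁻¹ • v with hw
  have hfw : f w = 1 := by
    rw [hw, map_smul, smul_eq_mul, inv_mul_cancel₀ hv]
  set J : Set ℝ := f '' C with hJ
  have hCJ : C = f ⁻¹' J := by
    ext x
    constructor
    · intro hx; exact ⟨x, hx, rfl⟩
    · intro hx
      obtain ⟨y, hy, hxy⟩ := hx
      obtain ⟨r, hr⟩ := hker (x - y) (by rw [map_sub, hxy, sub_self])
      have hxe : x = y + r • t := by rw [← hr]; abel
      rw [hxe]; exact key y hy r
  have hJsec : J = (fun s : ℝ => s • w) ⁻¹' C := by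
    ext s
    constructor
    · rintro ⟨y, hy, hys⟩
      show s • w ∈ C
      rw [hCJ]
      show f (s • w) ∈ J
      rw [map_smul, hfw, smul_eq_mul, mul_one]
      exact ⟨y, hy, hys⟩
    · intro hs
      exact ⟨s • w, hs, by rw [map_smul, hfw, smul_eq_mul, mul_one]⟩
  have hJclosed : IsClosed J := by
    rw [hJsec]
    exact hcl.preimage (continuous_id.smul continuous_const)
  have hJconv : Convex ℝ J := hconv.linear_image f
  have hJoc : J.OrdConnected := hJconv.ordConnected
  have hJne : J.Nonempty := hne.image f
  -- two distinct points in J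
  obtain ⟨x₀, hx₀⟩ := hint
  obtain ⟨ε, hε, hball⟩ := Metric.isOpen_iff.mp isOpen_interior x₀ hx₀
  have hw0 : w ≠ 0 := by
    intro h; rw [h, map_zero] at hfw; exact one_ne_zero hfw.symm
  have hwn : 0 < ‖w‖ := norm_pos_iff.mpr hw0
  set δ : ℝ := ε / (2 * ‖w‖) with hδ'
  have hδ : 0 < δ := div_pos hε (by positivity)
  have hx1 : x₀ + δ • w ∈ C := by
    apply interior_subset
    apply hball
    rw [Metric.mem_ball, dist_eq_norm]
    have h1 : x₀ + δ • w - x₀ = δ • w := by abel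
    rw [h1, norm_smul, Real.norm_eq_abs, abs_of_pos hδ, hδ']
    have h2 : ε / (2 * ‖w‖) * ‖w‖ = ε / 2 := by field_simp
    rw [h2]
    linarith
  have hu : f x₀ ∈ J := ⟨x₀, interior_subset hx₀, rfl⟩
  have hv2 : f x₀ + δ ∈ J := by
    refine ⟨x₀ + δ • w, hx1, ?_⟩
    rw [map_add, map_smul, hfw, smul_eq_mul, mul_one]
  by_cases hbdd : BddAbove J
  · by_cases hbddb : BddBelow J
    · -- strip
      right
      set c1 := sInf J with hc1'
      set c2 := sSup J with hc2'
      have hc1 : c1 ∈ J := hJclosed.csInf_mem hJne hbddb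
      have hc2 : c2 ∈ J := hJclosed.csSup_mem hJne hbdd
      have hJeq : J = Set.Icc c1 c2 := by
        apply Set.Subset.antisymm
        · intro z hz; exact ⟨csInf_le hbddb hz, le_csSup hbdd hz⟩
        · exact hJoc.out hc1 hc2
      have hlt : c1 < c2 := by
        have h1 := csInf_le hbddb hu
        have h2 := le_csSup hbdd hv2
        linarith
      refine ⟨f, c1, c2, hf0, hft, hlt, ?_⟩
      rw [hCJ, hJeq]
      ext x
      simp [Set.mem_Icc]
    · -- half-plane Iic
      left
      set c2 := sSup J with hc2'
      have hc2 : c2 ∈ J := hJclosed.csSup_mem hJne hbdd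
      have hJeq : J = Set.Iic c2 := by
        apply Set.Subset.antisymm
        · intro z hz; exact le_csSup hbdd hz
        · intro z hz
          obtain ⟨y, hyJ, hyz⟩ := not_bddBelow_iff.mp hbddb z
          exact hJoc.out hyJ hc2 ⟨hyz.le, hz⟩
      refine ⟨f, c2, hf0, hft, ?_⟩
      rw [hCJ, hJeq]
      ext x
      simp [Set.mem_Iic]
  · by_cases hbddb : BddBelow J
    · -- half-plane Ici, use -f
      left
      set c1 := sInf J with hc1'
      have hc1 : c1 ∈ J := hJclosed.csInf_mem hJne hbddb
      have hJeq : J = Set.Ici c1 := by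
        apply Set.Subset.antisymm
        · intro z hz; exact csInf_le hbddb hz
        · intro z hz
          obtain ⟨y, hyJ, hyz⟩ := not_bddAbove_iff.mp hbdd z
          exact hJoc.out hc1 hyJ ⟨hz, hyz.le⟩
      refine ⟨-f, -c1, neg_ne_zero.mpr hf0, by simp [hft], ?_⟩
      rw [hCJ, hJeq]
      ext x
      simp [Set.mem_Ici]
    · -- J = univ : contradiction
      exfalso
      apply hne_univ
      have hJu : J = Set.univ := by
        ext z
        simp only [Set.mem_univ, iff_true]
        obtain ⟨y1, hy1, h1⟩ := not_bddBelow_iff.mp hbddb z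
        obtain ⟨y2, hy2, h2⟩ := not_bddAbove_iff.mp hbdd z
        exact hJoc.out hy1 hy2 ⟨h1.le, h2.le⟩
      rw [hCJ, hJu, Set.preimage_univ]
end
end

section
/- In the triangular lattice graph E, for all vertices u, v ∈ ℤ × ℤ, writing (a,b) = u − v, the graph distance satisfies: dist_E(u,v) = max(|a|,|b|) if a·b ≥ 0, and dist_E(u,v) = |a| + |b| if a·b < 0. -/
/-- The triangular lattice graph `E`: vertex set `ℤ × ℤ`, with `u` and `v` adjacent
iff `u - v ∈ {(1,0), (-1,0), (0,1), (0,-1), (1,1), (-1,-1)}`. -/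
def triLattice : SimpleGraph (ℤ × ℤ) where
  Adj u v := (u - v) ∈ ({(1,0), (-1,0), (0,1), (0,-1), (1,1), (-1,-1)} : Set (ℤ × ℤ))
  symm := by
    constructor
    intro u v h
    simp only [Set.mem_insert_iff, Set.mem_singleton_iff, Prod.ext_iff, Prod.fst_sub,
      Prod.snd_sub] at h ⊢
    omega
  loopless := by
    constructor
    intro u h
    simp only [Set.mem_insert_iff, Set.mem_singleton_iff, Prod.ext_iff, Prod.fst_sub,
      Prod.snd_sub] at h
    omega

/-- The conjectured distance function on differences. -/
def triDist (a b : ℤ) : ℕ :=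
  if (0 ≤ a ∧ 0 ≤ b) ∨ (a ≤ 0 ∧ b ≤ 0) then max a.natAbs b.natAbs
  else a.natAbs + b.natAbs

lemma triDist_spec (a b : ℤ) :
    (((0 ≤ a ∧ 0 ≤ b) ∨ (a ≤ 0 ∧ b ≤ 0)) ∧ triDist a b = max a.natAbs b.natAbs) ∨
    (¬((0 ≤ a ∧ 0 ≤ b) ∨ (a ≤ 0 ∧ b ≤ 0)) ∧ triDist a b = a.natAbs + b.natAbs) := by
  unfold triDist; split <;> simp_all

lemma triDist_eq_zero (a b : ℤ) (h : triDist a b = 0) : a = 0 ∧ b = 0 := by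
  rcases triDist_spec a b with ⟨_, h'⟩ | ⟨_, h'⟩ <;> omega

lemma triDist_add_le (a b c d : ℤ)
    (h : (c = 1 ∧ d = 0) ∨ (c = -1 ∧ d = 0) ∨ (c = 0 ∧ d = 1) ∨ (c = 0 ∧ d = -1) ∨
      (c = 1 ∧ d = 1) ∨ (c = -1 ∧ d = -1)) :
    triDist (a + c) (b + d) ≤ triDist a b + 1 := by
  rcases triDist_spec a b with ⟨h1, e1⟩ | ⟨h1, e1⟩ <;>
    rcases triDist_spec (a + c) (b + d) with ⟨h2, e2⟩ | ⟨h2, e2⟩ <;> omega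

lemma triDist_succ (a b : ℤ) (n : ℕ) (h : triDist a b = n + 1) :
    ∃ c d : ℤ, ((c = 1 ∧ d = 0) ∨ (c = -1 ∧ d = 0) ∨ (c = 0 ∧ d = 1) ∨ (c = 0 ∧ d = -1) ∨
      (c = 1 ∧ d = 1) ∨ (c = -1 ∧ d = -1)) ∧ triDist (a - c) (b - d) = n := by
  have key : ∀ c d : ℤ, triDist a b = n + 1 →
      (((0 ≤ a - c ∧ 0 ≤ b - d) ∨ (a - c ≤ 0 ∧ b - d ≤ 0)) ∧
        triDist (a-c) (b-d) = max (a-c).natAbs (b-d).natAbs) ∨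
      (¬((0 ≤ a - c ∧ 0 ≤ b - d) ∨ (a - c ≤ 0 ∧ b - d ≤ 0)) ∧
        triDist (a-c) (b-d) = (a-c).natAbs + (b-d).natAbs) := fun c d _ => triDist_spec _ _
  rcases triDist_spec a b with ⟨h1, e1⟩ | ⟨h1, e1⟩
  · rcases lt_trichotomy a 0 with ha | ha | ha <;> rcases lt_trichotomy b 0 with hb | hb | hb
    · exact ⟨-1, -1, by tauto, by rcases key (-1) (-1) h with ⟨_, e⟩ | ⟨_, e⟩ <;> omega⟩
    · exact ⟨-1, 0, by tauto, by rcases key (-1) 0 h with ⟨_, e⟩ | ⟨_, e⟩ <;> omega⟩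
    · omega
    · exact ⟨0, -1, by tauto, by rcases key 0 (-1) h with ⟨_, e⟩ | ⟨_, e⟩ <;> omega⟩
    · omega
    · exact ⟨0, 1, by tauto, by rcases key 0 1 h with ⟨_, e⟩ | ⟨_, e⟩ <;> omega⟩
    · omega
    · exact ⟨1, 0, by tauto, by rcases key 1 0 h with ⟨_, e⟩ | ⟨_, e⟩ <;> omega⟩
    · exact ⟨1, 1, by tauto, by rcases key 1 1 h with ⟨_, e⟩ | ⟨_, e⟩ <;> omega⟩
  · rcases lt_trichotomy a 0 with ha | ha | ha
    · exact ⟨0, 1, by tauto, by rcases key 0 1 h with ⟨_, e⟩ | ⟨_, e⟩ <;> omega⟩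
    · omega
    · exact ⟨1, 0, by tauto, by rcases key 1 0 h with ⟨_, e⟩ | ⟨_, e⟩ <;> omega⟩

lemma triLattice_adj_iff (u v : ℤ × ℤ) : triLattice.Adj u v ↔
    ((u.1 - v.1 = 1 ∧ u.2 - v.2 = 0) ∨ (u.1 - v.1 = -1 ∧ u.2 - v.2 = 0) ∨
     (u.1 - v.1 = 0 ∧ u.2 - v.2 = 1) ∨ (u.1 - v.1 = 0 ∧ u.2 - v.2 = -1) ∨
     (u.1 - v.1 = 1 ∧ u.2 - v.2 = 1) ∨ (u.1 - v.1 = -1 ∧ u.2 - v.2 = -1)) := by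
  show (u - v) ∈ _ ↔ _
  simp only [Set.mem_insert_iff, Set.mem_singleton_iff, Prod.ext_iff, Prod.fst_sub,
    Prod.snd_sub]

lemma triLattice_lower (u v : ℤ × ℤ) (w : triLattice.Walk u v) :
    triDist (u.1 - v.1) (u.2 - v.2) ≤ w.length := by
  induction w with
  | nil => simp [triDist]
  | @cons x y z hadj p ih =>
    rw [triLattice_adj_iff] at hadj
    have := triDist_add_le (y.1 - z.1) (y.2 - z.2) (x.1 - y.1) (x.2 - y.2) (by tauto)
    simp only [SimpleGraph.Walk.length_cons]
    have e1 : y.1 - z.1 + (x.1 - y.1) = x.1 - z.1 := by ring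
    have e2 : y.2 - z.2 + (x.2 - y.2) = x.2 - z.2 := by ring
    rw [e1, e2] at this
    omega

lemma triLattice_upper (n : ℕ) : ∀ u v : ℤ × ℤ, triDist (u.1 - v.1) (u.2 - v.2) = n →
    ∃ w : triLattice.Walk u v, w.length = n := by
  induction n with
  | zero =>
    intro u v h
    obtain ⟨h1, h2⟩ := triDist_eq_zero _ _ h
    have : u = v := by ext <;> omega
    subst this
    exact ⟨SimpleGraph.Walk.nil, rfl⟩
  | succ n ih =>
    intro u v h
    obtain ⟨c, d, hcd, hstep⟩ := triDist_succ _ _ _ h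
    set u' : ℤ × ℤ := (u.1 - c, u.2 - d) with hu'
    have hadj : triLattice.Adj u u' := by rw [triLattice_adj_iff]; simp [hu']; tauto
    obtain ⟨w, hw⟩ := ih u' v (by
      simp only [hu']
      have e1 : u.1 - c - v.1 = u.1 - v.1 - c := by ring
      have e2 : u.2 - d - v.2 = u.2 - v.2 - d := by ring
      rw [e1, e2]; exact hstep)
    exact ⟨SimpleGraph.Walk.cons hadj w, by simp [hw]⟩

lemma triLattice_dist_eq (u v : ℤ × ℤ) :
    triLattice.dist u v = triDist (u.1 - v.1) (u.2 - v.2) := by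
  obtain ⟨w, hw⟩ := triLattice_upper _ u v rfl
  have h1 : triLattice.dist u v ≤ triDist (u.1 - v.1) (u.2 - v.2) := hw ▸ SimpleGraph.dist_le w
  obtain ⟨p, hp⟩ :=
    SimpleGraph.Reachable.exists_walk_length_eq_dist (⟨w⟩ : triLattice.Reachable u v)
  have h2 := triLattice_lower u v p
  omega

/-- **Distance in the triangular lattice.** For vertices `u, v` of the triangular lattice
graph `E`, writing `(a, b) = u - v`, the graph distance is `max |a| |b|` when `a*b ≥ 0`
and `|a| + |b|` when `a*b < 0`. -/
theorem triLattice_dist (u v : ℤ × ℤ) (a b : ℤ) (h : (a, b) = u - v) :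
    (a * b ≥ 0 → (triLattice.dist u v : ℤ) = max |a| |b|) ∧
    (a * b < 0 → (triLattice.dist u v : ℤ) = |a| + |b|) := by
  have ha : a = u.1 - v.1 ∧ b = u.2 - v.2 := by
    rw [Prod.ext_iff] at h; simpa using h
  have hd : triLattice.dist u v = triDist a b := by
    rw [ha.1, ha.2]; exact triLattice_dist_eq u v
  constructor
  · intro hab
    have hsign := Int.mul_nonneg_iff.mp hab
    rcases triDist_spec a b with ⟨h1, e1⟩ | ⟨h1, e1⟩
    · rw [hd, e1]
      simp only [Nat.cast_max, Int.natCast_natAbs]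
    · exact absurd hsign h1
  · intro hab
    rcases triDist_spec a b with ⟨h1, e1⟩ | ⟨h1, e1⟩
    · rcases h1 with ⟨h1a, h1b⟩ | ⟨h1a, h1b⟩ <;> nlinarith
    · rw [hd, e1]
      simp only [Nat.cast_add, Int.natCast_natAbs]
end

section
/- The Euclidean plane is not quasi-isometrically embeddable in the real line: there do not exist a map f : ℝ² → ℝ and constants λ > 0 and δ ≥ 0 such that for all x, y ∈ ℝ², both |f(x) − f(y)| ≤ λ·dist(x,y) + δ and dist(x,y) ≤ λ·|f(x) − f(y)| + δ hold, where dist denotes the Euclidean distance on ℝ². -/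
lemma qi_aux_one_le_abs_nat_sub {a b : ℕ} (h : a ≠ b) : 1 ≤ |(a:ℝ) - (b:ℝ)| := by
  have h1 : (1:ℤ) ≤ |(a:ℤ) - (b:ℤ)| := Int.one_le_abs (by omega)
  exact_mod_cast h1

lemma qi_aux_dist_eq (x y : EuclideanSpace ℝ (Fin 2)) :
    dist x y = Real.sqrt ((x 0 - y 0)^2 + (x 1 - y 1)^2) := by
  rw [EuclideanSpace.dist_eq, Fin.sum_univ_two]
  simp [Real.dist_eq, sq_abs]

lemma qi_aux_coord0_le (x y : EuclideanSpace ℝ (Fin 2)) : |x 0 - y 0| ≤ dist x y := by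
  rw [qi_aux_dist_eq, ← Real.sqrt_sq_eq_abs]
  exact Real.sqrt_le_sqrt (by nlinarith [sq_nonneg (x 1 - y 1)])

lemma qi_aux_coord1_le (x y : EuclideanSpace ℝ (Fin 2)) : |x 1 - y 1| ≤ dist x y := by
  rw [qi_aux_dist_eq, ← Real.sqrt_sq_eq_abs]
  exact Real.sqrt_le_sqrt (by nlinarith [sq_nonneg (x 0 - y 0)])

lemma qi_aux_dist_le (x y : EuclideanSpace ℝ (Fin 2)) :
    dist x y ≤ |x 0 - y 0| + |x 1 - y 1| := by
  rw [qi_aux_dist_eq]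
  have h : (x 0 - y 0)^2 + (x 1 - y 1)^2 ≤ (|x 0 - y 0| + |x 1 - y 1|)^2 := by
    nlinarith [abs_nonneg (x 0 - y 0), abs_nonneg (x 1 - y 1),
      sq_abs (x 0 - y 0), sq_abs (x 1 - y 1)]
  calc Real.sqrt ((x 0 - y 0)^2 + (x 1 - y 1)^2)
      ≤ Real.sqrt ((|x 0 - y 0| + |x 1 - y 1|)^2) := Real.sqrt_le_sqrt h
    _ = |x 0 - y 0| + |x 1 - y 1| := Real.sqrt_sq (by positivity)

set_option maxHeartbeats 1600000 in
/-- **The Euclidean plane is not quasi-isometrically embeddable in the real line.**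
There is no map `f : ℝ² → ℝ` together with constants `λ > 0` and `δ ≥ 0` such that for
all `x, y ∈ ℝ²` both `|f x - f y| ≤ λ * dist x y + δ` and
`dist x y ≤ λ * |f x - f y| + δ`. -/
theorem no_quasiIsometric_embedding_plane_into_line :
    ¬ ∃ (f : EuclideanSpace ℝ (Fin 2) → ℝ) (lam δ : ℝ), 0 < lam ∧ 0 ≤ δ ∧
      ∀ x y : EuclideanSpace ℝ (Fin 2),
        |f x - f y| ≤ lam * dist x y + δ ∧ dist x y ≤ lam * |f x - f y| + δ := by
  rintro ⟨f, lam, δ, hlam, hδ, H⟩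
  set s : ℝ := δ + 1 with hs
  have hs0 : 0 < s := by simp only [hs]; linarith
  obtain ⟨N, hN⟩ := exists_nat_gt (4 * lam^2 * s + 2 * lam * δ + 2)
  have hA : (2:ℝ) ≤ 4 * lam^2 * s + 2 * lam * δ + 2 := by nlinarith
  have hN1 : (1:ℝ) ≤ (N:ℝ) := by linarith
  have hN0 : 0 < N := by exact_mod_cast lt_of_lt_of_le zero_lt_one hN1
  -- the grid
  set g : Fin N × Fin N → EuclideanSpace ℝ (Fin 2) :=
    fun p => (WithLp.equiv 2 (Fin 2 → ℝ)).symm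
      ![s * ((p.1 : ℕ) : ℝ), s * ((p.2 : ℕ) : ℝ)] with hg
  have hg0 : ∀ p, g p 0 = s * ((p.1 : ℕ) : ℝ) := by intro p; simp [hg]
  have hg1 : ∀ p, g p 1 = s * ((p.2 : ℕ) : ℝ) := by intro p; simp [hg]
  -- separation of grid points
  have hsepg : ∀ p q : Fin N × Fin N, p ≠ q → s ≤ dist (g p) (g q) := by
    intro p q hpq
    rcases (not_and_or.1 (fun h => hpq (Prod.ext h.1 h.2))) with h | h
    · refine le_trans ?_ (qi_aux_coord0_le (g p) (g q))
      rw [hg0, hg0, ← mul_sub, abs_mul, abs_of_pos hs0]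
      have := qi_aux_one_le_abs_nat_sub (a := (p.1 : ℕ)) (b := (q.1 : ℕ))
        (fun e => h (Fin.val_injective e))
      nlinarith
    · refine le_trans ?_ (qi_aux_coord1_le (g p) (g q))
      rw [hg1, hg1, ← mul_sub, abs_mul, abs_of_pos hs0]
      have := qi_aux_one_le_abs_nat_sub (a := (p.2 : ℕ)) (b := (q.2 : ℕ))
        (fun e => h (Fin.val_injective e))
      nlinarith
  -- upper bound on grid diameter
  have hdiam : ∀ p q : Fin N × Fin N, dist (g p) (g q) ≤ 2 * s * N := by
    intro p q
    refine le_trans (qi_aux_dist_le (g p) (g q)) ?_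
    have b1 : |g p 0 - g q 0| ≤ s * N := by
      rw [hg0, hg0, ← mul_sub, abs_mul, abs_of_pos hs0]
      have h1 : ((p.1 : ℕ) : ℝ) ≤ N := by exact_mod_cast (p.1.isLt).le
      have h2 : ((q.1 : ℕ) : ℝ) ≤ N := by exact_mod_cast (q.1.isLt).le
      have h3 : (0:ℝ) ≤ ((p.1 : ℕ) : ℝ) := by positivity
      have h4 : (0:ℝ) ≤ ((q.1 : ℕ) : ℝ) := by positivity
      have : |((p.1 : ℕ) : ℝ) - ((q.1 : ℕ) : ℝ)| ≤ N := abs_sub_le_iff.2 ⟨by linarith, by linarith⟩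
      nlinarith
    have b2 : |g p 1 - g q 1| ≤ s * N := by
      rw [hg1, hg1, ← mul_sub, abs_mul, abs_of_pos hs0]
      have h1 : ((p.2 : ℕ) : ℝ) ≤ N := by exact_mod_cast (p.2.isLt).le
      have h2 : ((q.2 : ℕ) : ℝ) ≤ N := by exact_mod_cast (q.2.isLt).le
      have h3 : (0:ℝ) ≤ ((p.2 : ℕ) : ℝ) := by positivity
      have h4 : (0:ℝ) ≤ ((q.2 : ℕ) : ℝ) := by positivity
      have : |((p.2 : ℕ) : ℝ) - ((q.2 : ℕ) : ℝ)| ≤ N := abs_sub_le_iff.2 ⟨by linarith, by linarith⟩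
      nlinarith
    linarith
  -- f values are separated
  have hsep : ∀ p q : Fin N × Fin N, p ≠ q → 1 / lam ≤ |f (g p) - f (g q)| := by
    intro p q hpq
    have h1 := (H (g p) (g q)).2
    have h2 := hsepg p q hpq
    rw [div_le_iff₀ hlam]
    nlinarith [abs_nonneg (f (g p) - f (g q))]
  -- f values are bounded
  set p₀ : Fin N × Fin N := (⟨0, hN0⟩, ⟨0, hN0⟩) with hp₀
  set c : ℝ := f (g p₀) with hc
  set M : ℝ := lam * (2 * s * N) + δ with hM
  have hbnd : ∀ p : Fin N × Fin N, |f (g p) - c| ≤ M := by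
    intro p
    refine le_trans (H (g p) (g p₀)).1 ?_
    have := hdiam p p₀
    nlinarith
  -- the floor map
  set F : Fin N × Fin N → ℤ := fun p => ⌊lam * f (g p)⌋ with hF
  have hFinj : Function.Injective F := by
    intro p q h
    by_contra hpq
    have h1 := hsep p q hpq
    have h2 := Int.abs_sub_lt_one_of_floor_eq_floor h
    have h3 : |lam * f (g p) - lam * f (g q)| = lam * |f (g p) - f (g q)| := by
      rw [← mul_sub, abs_mul, abs_of_pos hlam]
    rw [h3] at h2
    have h4 : lam * (1 / lam) ≤ lam * |f (g p) - f (g q)| :=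
      mul_le_mul_of_nonneg_left h1 hlam.le
    rw [mul_one_div, div_self hlam.ne'] at h4
    linarith
  set lo : ℤ := ⌊lam * (c - M)⌋ with hlo
  set hi : ℤ := ⌊lam * (c + M)⌋ with hhi
  have hrange : ∀ p : Fin N × Fin N, F p ∈ Finset.Icc lo hi := by
    intro p
    have hb := hbnd p
    have h1 : lam * (c - M) ≤ lam * f (g p) := by
      have := abs_le.1 hb
      nlinarith
    have h2 : lam * f (g p) ≤ lam * (c + M) := by
      have := abs_le.1 hb
      nlinarith
    exact Finset.mem_Icc.2 ⟨Int.floor_mono h1, Int.floor_mono h2⟩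
  -- counting
  have hcard : N * N ≤ (Finset.Icc lo hi).card := by
    have := Finset.card_le_card_of_injOn (s := (Finset.univ : Finset (Fin N × Fin N))) F (fun p _ => hrange p) hFinj.injOn
    simpa using this
  obtain ⟨K, hK⟩ : ∃ K : ℕ, K = N * N := ⟨N * N, rfl⟩
  rw [← hK] at hcard
  have hKpos : 0 < K := by rw [hK]; exact Nat.mul_pos hN0 hN0
  have hcard' : ((K : ℤ)) ≤ hi + 1 - lo := by
    rw [Int.card_Icc] at hcard
    omega
  have hcastR : ((N : ℝ) * N) ≤ (hi : ℝ) + 1 - lo := by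
    have : ((K : ℝ)) ≤ (hi : ℝ) + 1 - lo := by exact_mod_cast hcard'
    rw [hK] at this
    push_cast at this
    linarith
  have h5 : (hi : ℝ) ≤ lam * (c + M) := Int.floor_le _
  have h6 : lam * (c - M) - 1 < (lo : ℝ) := by
    exact Int.sub_one_lt_floor (lam * (c - M))
  have hfin : (N : ℝ) * N ≤ 2 * lam * M + 2 := by nlinarith
  have hMval : 2 * lam * M + 2 = 4 * lam^2 * s * N + 2 * lam * δ + 2 := by
    rw [hM]; ring
  rw [hMval] at hfin
  nlinarith [mul_le_mul_of_nonneg_left hN1 (by positivity : (0:ℝ) ≤ 2 * lam * δ + 2),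
    mul_lt_mul_of_pos_right hN (lt_of_lt_of_le zero_lt_one hN1)]
end
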